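/- arXiv:nlin/0703062 — 4 statements merged into one kernel-verified Lean document; each statement's English description precedes it below -/
import Mathlib

section
/- For the bivector P_1^{(2)} with a = (0,0,1), b = (b_1, ib_1, 0), the roots q_1, q_2 of the polynomial A(λ) = λ^2 + (t_3 − s_3)λ + (t_1 + it_2)(s_1 + is_2)b_1^2 − s_3 t_3 satisfy {q_1, q_2}_0 = 0 where {·,·}_0 is the canonical so*(4) bracket; equivalently, the coefficients satisfy {t_3 − s_3, (t_1+it_2)(s_1+is_2)b_1^2 − s_3t_3}_0 = 0. -/
noncomputable section

/-- Phase space `ℂ^6`. -/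
abbrev V6 : Type := Fin 6 → ℂ

/-- Partial derivative `∂ᵢ f` at `z`. -/
def pd (i : Fin 6) (f : V6 → ℂ) (z : V6) : ℂ := fderiv ℂ f z (Pi.single i 1)

/-- The antisymmetric matrix `v_M` with `v_M w = v × w`. -/
def cm (v : Fin 3 → ℂ) : Matrix (Fin 3) (Fin 3) ℂ :=
  !![0, v 2, -v 1; -v 2, 0, v 0; v 1, -v 0, 0]

/-- Euclidean inner product. -/
def dot (u v : Fin 3 → ℂ) : ℂ := ∑ i, u i * v i

/-- Cross product. -/
def cross (u v : Fin 3 → ℂ) : Fin 3 → ℂ :=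
  ![u 1 * v 2 - u 2 * v 1, u 2 * v 0 - u 0 * v 2, u 0 * v 1 - u 1 * v 0]

/-- Outer product `(x ⊗ y)_{ij} = xᵢ yⱼ`. -/
def outer (u v : Fin 3 → ℂ) : Matrix (Fin 3) (Fin 3) ℂ := Matrix.of fun i j => u i * v j

def sv (z : V6) (i : Fin 3) : ℂ := z (Fin.castAdd 3 i)
def tv (z : V6) (i : Fin 3) : ℂ := z (Fin.natAdd 3 i)

/-- Build a 6×6 matrix from four 3×3 blocks. -/
def bb (A B C D : Matrix (Fin 3) (Fin 3) ℂ) : Matrix (Fin 6) (Fin 6) ℂ :=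
  (Matrix.fromBlocks A B C D).submatrix
    (finSumFinEquiv (m := 3) (n := 3)).symm (finSumFinEquiv (m := 3) (n := 3)).symm

/-- The canonical Lie–Poisson bivector of `so(3) ⊕ so(3)`. -/
def P0 (z : V6) : Matrix (Fin 6) (Fin 6) ℂ := bb (cm (sv z)) 0 0 (cm (tv z))

/-- The bracket `{f,g} = Σ P^{ij} ∂ᵢf ∂ⱼg` associated with a bivector `P`. -/
def pb (P : V6 → Matrix (Fin 6) (Fin 6) ℂ) (f g : V6 → ℂ) (z : V6) : ℂ :=
  ∑ i, ∑ j, P z i j * pd i f z * pd j g z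


def prj (k : Fin 6) : V6 →L[ℂ] ℂ := ContinuousLinearMap.proj k

lemma hcoord (k : Fin 6) (z : V6) :
    HasFDerivAt (fun w : V6 => w k) (prj k) z :=
  (prj k).hasFDerivAt

lemma pd_f (i : Fin 6) (z : V6) :
    pd i (fun w : V6 => w 5 - w 2) z
      = (Pi.single i 1 : V6) 5 - (Pi.single i 1 : V6) 2 := by
  rw [pd, (show HasFDerivAt (fun w : V6 => w 5 - w 2) (prj 5 - prj 2) z from (hcoord 5 z).sub (hcoord 2 z)).fderiv]; rfl

lemma hg (b1 : ℂ) (z : V6) : HasFDerivAt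
    (fun w : V6 => (w 3 + Complex.I * w 4) * (w 0 + Complex.I * w 1) * b1 ^ 2 - w 2 * w 5)
    ((((prj 3 + Complex.I • prj 4).smulRight ((z 0 + Complex.I * z 1)) +
      (prj 0 + Complex.I • prj 1).smulRight ((z 3 + Complex.I * z 4))).smulRight (b1 ^ 2)) -
     ((prj 2).smulRight (z 5) + (prj 5).smulRight (z 2))) z := by
  have h34 : HasFDerivAt (fun w : V6 => w 3 + Complex.I * w 4)
      (prj 3 + Complex.I • prj 4) z :=
    (hcoord 3 z).add ((hcoord 4 z).const_mul Complex.I)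
  have h01 : HasFDerivAt (fun w : V6 => w 0 + Complex.I * w 1)
      (prj 0 + Complex.I • prj 1) z :=
    (hcoord 0 z).add ((hcoord 1 z).const_mul Complex.I)
  have hmul := (h34.mul h01).mul_const (b1 ^ 2)
  have h25 := (hcoord 2 z).mul (hcoord 5 z)
  have := hmul.sub h25
  refine (show HasFDerivAt (fun w : V6 => (w 3 + Complex.I * w 4) * (w 0 + Complex.I * w 1) * b1 ^ 2 - w 2 * w 5) _ z from this).congr_fderiv ?_
  ext v
  simp [prj, ContinuousLinearMap.smulRight_apply]
  ring

lemma pd_g (b1 : ℂ) (i : Fin 6) (z : V6) :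
    pd i (fun w : V6 => (w 3 + Complex.I * w 4) * (w 0 + Complex.I * w 1) * b1 ^ 2 - w 2 * w 5) z
    = (((Pi.single i 1 : V6) 3 + Complex.I * (Pi.single i 1 : V6) 4) * (z 0 + Complex.I * z 1)
      + ((Pi.single i 1 : V6) 0 + Complex.I * (Pi.single i 1 : V6) 1) * (z 3 + Complex.I * z 4)) * b1 ^ 2
      - ((Pi.single i 1 : V6) 2 * z 5 + (Pi.single i 1 : V6) 5 * z 2) := by
  rw [pd, (hg b1 z).fderiv]
  simp [prj, ContinuousLinearMap.smulRight_apply]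

lemma P0e00 (z : V6) : P0 z 0 0 = 0 := rfl
lemma P0e01 (z : V6) : P0 z 0 1 = z 2 := rfl
lemma P0e02 (z : V6) : P0 z 0 2 = -z 1 := rfl
lemma P0e03 (z : V6) : P0 z 0 3 = 0 := rfl
lemma P0e04 (z : V6) : P0 z 0 4 = 0 := rfl
lemma P0e05 (z : V6) : P0 z 0 5 = 0 := rfl
lemma P0e10 (z : V6) : P0 z 1 0 = -z 2 := rfl
lemma P0e11 (z : V6) : P0 z 1 1 = 0 := rfl
lemma P0e12 (z : V6) : P0 z 1 2 = z 0 := rfl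
lemma P0e13 (z : V6) : P0 z 1 3 = 0 := rfl
lemma P0e14 (z : V6) : P0 z 1 4 = 0 := rfl
lemma P0e15 (z : V6) : P0 z 1 5 = 0 := rfl
lemma P0e20 (z : V6) : P0 z 2 0 = z 1 := rfl
lemma P0e21 (z : V6) : P0 z 2 1 = -z 0 := rfl
lemma P0e22 (z : V6) : P0 z 2 2 = 0 := rfl
lemma P0e23 (z : V6) : P0 z 2 3 = 0 := rfl
lemma P0e24 (z : V6) : P0 z 2 4 = 0 := rfl
lemma P0e25 (z : V6) : P0 z 2 5 = 0 := rfl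
lemma P0e30 (z : V6) : P0 z 3 0 = 0 := rfl
lemma P0e31 (z : V6) : P0 z 3 1 = 0 := rfl
lemma P0e32 (z : V6) : P0 z 3 2 = 0 := rfl
lemma P0e33 (z : V6) : P0 z 3 3 = 0 := rfl
lemma P0e34 (z : V6) : P0 z 3 4 = z 5 := rfl
lemma P0e35 (z : V6) : P0 z 3 5 = -z 4 := rfl
lemma P0e40 (z : V6) : P0 z 4 0 = 0 := rfl
lemma P0e41 (z : V6) : P0 z 4 1 = 0 := rfl
lemma P0e42 (z : V6) : P0 z 4 2 = 0 := rfl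
lemma P0e43 (z : V6) : P0 z 4 3 = -z 5 := rfl
lemma P0e44 (z : V6) : P0 z 4 4 = 0 := rfl
lemma P0e45 (z : V6) : P0 z 4 5 = z 3 := rfl
lemma P0e50 (z : V6) : P0 z 5 0 = 0 := rfl
lemma P0e51 (z : V6) : P0 z 5 1 = 0 := rfl
lemma P0e52 (z : V6) : P0 z 5 2 = 0 := rfl
lemma P0e53 (z : V6) : P0 z 5 3 = z 4 := rfl
lemma P0e54 (z : V6) : P0 z 5 4 = -z 3 := rfl
lemma P0e55 (z : V6) : P0 z 5 5 = 0 := rfl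

lemma single_app (i j : Fin 6) : (Pi.single i 1 : V6) j = if j = i then 1 else 0 :=
  Pi.single_apply i 1 j

/-- the coefficients of the minimal polynomial
`A(λ) = λ² + (t₃−s₃)λ + (t₁+it₂)(s₁+is₂)b₁² − s₃t₃` Poisson-commute, hence its
roots `q₁,q₂` satisfy `{q₁,q₂}₀ = 0`. -/
theorem minpoly_coeffs_commute_P12 (b1 : ℂ) (z : V6) :
    pb P0 (fun w => tv w 2 - sv w 2)
      (fun w => (tv w 0 + Complex.I * tv w 1) * (sv w 0 + Complex.I * sv w 1) * b1 ^ 2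
        - sv w 2 * tv w 2) z = 0 := by
  have hf : (fun w => tv w 2 - sv w 2) = fun w : V6 => w 5 - w 2 := rfl
  have hgeq : (fun w => (tv w 0 + Complex.I * tv w 1) * (sv w 0 + Complex.I * sv w 1) * b1 ^ 2
        - sv w 2 * tv w 2)
      = fun w : V6 => (w 3 + Complex.I * w 4) * (w 0 + Complex.I * w 1) * b1 ^ 2 - w 2 * w 5 := rfl
  rw [pb, hf, hgeq]
  simp only [Fin.sum_univ_six, pd_f, pd_g, P0e00, P0e01, P0e02, P0e03, P0e04, P0e05, P0e10, P0e11, P0e12, P0e13, P0e14, P0e15, P0e20, P0e21, P0e22, P0e23, P0e24, P0e25, P0e30, P0e31, P0e32, P0e33, P0e34, P0e35, P0e40, P0e41, P0e42, P0e43, P0e44, P0e45, P0e50, P0e51, P0e52, P0e53, P0e54, P0e55, single_app]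
  simp (config := { decide := true }) only [if_true, if_false]
  ring_nf
  simp only [Complex.I_sq]
  ring
end
end

section
/- Let A(λ) = λ^2 + (t_3 − s_3)λ + (t_1 + it_2)(s_1 + is_2)b_1^2 − s_3t_3 and B(λ) = (s_1 − is_2 + b_1^2(t_1 + it_2))λ + t_3(s_1 − is_2) + b_1^2 s_3(t_1 + it_2). Then with respect to the canonical so*(4) bracket {·,·}_0, for all λ, μ: {A(λ), A(μ)}_0 = 0, {B(λ), B(μ)}_0 = 0, and (λ − μ){A(λ), B(μ)}_0 = i(B(λ)A(μ) − A(λ)B(μ)). -/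
noncomputable section

/-- `A(λ)` for the second bivector. -/
def Apoly (b1 : ℂ) (lam : ℂ) (z : V6) : ℂ :=
  lam ^ 2 + (tv z 2 - sv z 2) * lam
    + (tv z 0 + Complex.I * tv z 1) * (sv z 0 + Complex.I * sv z 1) * b1 ^ 2
    - sv z 2 * tv z 2

/-- `B(λ)` for the second bivector. -/
def Bpoly (b1 : ℂ) (lam : ℂ) (z : V6) : ℂ :=
  (sv z 0 - Complex.I * sv z 1 + b1 ^ 2 * (tv z 0 + Complex.I * tv z 1)) * lam
    + tv z 2 * (sv z 0 - Complex.I * sv z 1)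
    + b1 ^ 2 * sv z 2 * (tv z 0 + Complex.I * tv z 1)

-- aux
lemma fderiv_coord (j : Fin 6) (z : V6) :
    fderiv ℂ (fun w : V6 => w j) z = ContinuousLinearMap.proj j :=
  (ContinuousLinearMap.proj j : V6 →L[ℂ] ℂ).fderiv

lemma diff_coord (j : Fin 6) : Differentiable ℂ (fun w : V6 => w j) :=
  (ContinuousLinearMap.proj j : V6 →L[ℂ] ℂ).differentiable

lemma pdA (b1 lam : ℂ) (i : Fin 6) (z : V6) :
    pd i (Apoly b1 lam) z =
    ((Pi.single i 1 : V6) 5 - (Pi.single i 1 : V6) 2) * lam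
      + (((Pi.single i 1 : V6) 3 + Complex.I * (Pi.single i 1 : V6) 4) * (z 0 + Complex.I * z 1)
         + (z 3 + Complex.I * z 4) * ((Pi.single i 1 : V6) 0 + Complex.I * (Pi.single i 1 : V6) 1)) * b1 ^ 2
      - ((Pi.single i 1 : V6) 2 * z 5 + z 2 * (Pi.single i 1 : V6) 5) := by
  have h : Apoly b1 lam = fun z : V6 => lam ^ 2 + (z 5 - z 2) * lam
      + (z 3 + Complex.I * z 4) * (z 0 + Complex.I * z 1) * b1 ^ 2
      - z 2 * z 5 := rfl
  rw [h]
  simp (disch := fun_prop (disch := exact diff_coord _)) only [pd, fderiv_fun_add, fderiv_fun_sub,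
    fderiv_fun_mul, fderiv_fun_const, fderiv_mul_const, fderiv_const_mul, fderiv_coord]
  simp only [ContinuousLinearMap.add_apply, ContinuousLinearMap.sub_apply,
    ContinuousLinearMap.smul_apply, ContinuousLinearMap.proj_apply,
    ContinuousLinearMap.zero_apply, Pi.zero_apply, smul_eq_mul]
  ring

lemma pdB (b1 lam : ℂ) (i : Fin 6) (z : V6) :
    pd i (Bpoly b1 lam) z =
    ((Pi.single i 1 : V6) 0 - Complex.I * (Pi.single i 1 : V6) 1
        + b1 ^ 2 * ((Pi.single i 1 : V6) 3 + Complex.I * (Pi.single i 1 : V6) 4)) * lam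
      + ((Pi.single i 1 : V6) 5 * (z 0 - Complex.I * z 1)
         + z 5 * ((Pi.single i 1 : V6) 0 - Complex.I * (Pi.single i 1 : V6) 1))
      + b1 ^ 2 * ((Pi.single i 1 : V6) 2 * (z 3 + Complex.I * z 4)
         + z 2 * ((Pi.single i 1 : V6) 3 + Complex.I * (Pi.single i 1 : V6) 4)) := by
  have h : Bpoly b1 lam = fun z : V6 =>
      (z 0 - Complex.I * z 1 + b1 ^ 2 * (z 3 + Complex.I * z 4)) * lam
      + z 5 * (z 0 - Complex.I * z 1) + b1 ^ 2 * z 2 * (z 3 + Complex.I * z 4) := rfl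
  rw [h]
  simp (disch := fun_prop (disch := exact diff_coord _)) only [pd, fderiv_fun_add, fderiv_fun_sub,
    fderiv_fun_mul, fderiv_fun_const, fderiv_mul_const, fderiv_const_mul, fderiv_coord]
  simp only [ContinuousLinearMap.add_apply, ContinuousLinearMap.sub_apply,
    ContinuousLinearMap.smul_apply, ContinuousLinearMap.proj_apply,
    ContinuousLinearMap.zero_apply, Pi.zero_apply, smul_eq_mul]
  ring

example (z : V6) : P0 z 0 1 = z 2 ∧ P0 z 3 4 = z 5 ∧ P0 z 0 4 = 0 := by
  refine ⟨?_, ?_, ?_⟩ <;>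
  simp [P0, bb, cm, sv, tv, Matrix.fromBlocks, finSumFinEquiv] <;> rfl


/-- the separation relations
`{A(λ),A(μ)}₀ = {B(λ),B(μ)}₀ = 0` and
`(λ−μ){A(λ),B(μ)}₀ = i(B(λ)A(μ) − A(λ)B(μ))`. -/
theorem AB_relations (b1 : ℂ) (lam mu : ℂ) (z : V6) :
    pb P0 (Apoly b1 lam) (Apoly b1 mu) z = 0 ∧
    pb P0 (Bpoly b1 lam) (Bpoly b1 mu) z = 0 ∧
    (lam - mu) * pb P0 (Apoly b1 lam) (Bpoly b1 mu) z =
      Complex.I * (Bpoly b1 lam z * Apoly b1 mu z - Apoly b1 lam z * Bpoly b1 mu z) := by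
  have hABz : ∀ l : ℂ, Apoly b1 l z = l ^ 2 + (z 5 - z 2) * l
      + (z 3 + Complex.I * z 4) * (z 0 + Complex.I * z 1) * b1 ^ 2 - z 2 * z 5 := fun _ => rfl
  have hBBz : ∀ l : ℂ, Bpoly b1 l z =
      (z 0 - Complex.I * z 1 + b1 ^ 2 * (z 3 + Complex.I * z 4)) * l
      + z 5 * (z 0 - Complex.I * z 1) + b1 ^ 2 * z 2 * (z 3 + Complex.I * z 4) := fun _ => rfl
  have hP00 : P0 z 0 0 = 0 := by
    simp [P0, bb, cm, sv, tv, Matrix.fromBlocks, finSumFinEquiv]; try rfl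
  have hP01 : P0 z 0 1 = z 2 := by
    simp [P0, bb, cm, sv, tv, Matrix.fromBlocks, finSumFinEquiv]; try rfl
  have hP02 : P0 z 0 2 = -z 1 := by
    simp [P0, bb, cm, sv, tv, Matrix.fromBlocks, finSumFinEquiv]; try rfl
  have hP03 : P0 z 0 3 = 0 := by
    simp [P0, bb, cm, sv, tv, Matrix.fromBlocks, finSumFinEquiv]; try rfl
  have hP04 : P0 z 0 4 = 0 := by
    simp [P0, bb, cm, sv, tv, Matrix.fromBlocks, finSumFinEquiv]; try rfl
  have hP05 : P0 z 0 5 = 0 := by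
    simp [P0, bb, cm, sv, tv, Matrix.fromBlocks, finSumFinEquiv]; try rfl
  have hP10 : P0 z 1 0 = -z 2 := by
    simp [P0, bb, cm, sv, tv, Matrix.fromBlocks, finSumFinEquiv]; try rfl
  have hP11 : P0 z 1 1 = 0 := by
    simp [P0, bb, cm, sv, tv, Matrix.fromBlocks, finSumFinEquiv]; try rfl
  have hP12 : P0 z 1 2 = z 0 := by
    simp [P0, bb, cm, sv, tv, Matrix.fromBlocks, finSumFinEquiv]; try rfl
  have hP13 : P0 z 1 3 = 0 := by
    simp [P0, bb, cm, sv, tv, Matrix.fromBlocks, finSumFinEquiv]; try rfl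
  have hP14 : P0 z 1 4 = 0 := by
    simp [P0, bb, cm, sv, tv, Matrix.fromBlocks, finSumFinEquiv]; try rfl
  have hP15 : P0 z 1 5 = 0 := by
    simp [P0, bb, cm, sv, tv, Matrix.fromBlocks, finSumFinEquiv]; try rfl
  have hP20 : P0 z 2 0 = z 1 := by
    simp [P0, bb, cm, sv, tv, Matrix.fromBlocks, finSumFinEquiv]; try rfl
  have hP21 : P0 z 2 1 = -z 0 := by
    simp [P0, bb, cm, sv, tv, Matrix.fromBlocks, finSumFinEquiv]; try rfl
  have hP22 : P0 z 2 2 = 0 := by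
    simp [P0, bb, cm, sv, tv, Matrix.fromBlocks, finSumFinEquiv]; try rfl
  have hP23 : P0 z 2 3 = 0 := by
    simp [P0, bb, cm, sv, tv, Matrix.fromBlocks, finSumFinEquiv]; try rfl
  have hP24 : P0 z 2 4 = 0 := by
    simp [P0, bb, cm, sv, tv, Matrix.fromBlocks, finSumFinEquiv]; try rfl
  have hP25 : P0 z 2 5 = 0 := by
    simp [P0, bb, cm, sv, tv, Matrix.fromBlocks, finSumFinEquiv]; try rfl
  have hP30 : P0 z 3 0 = 0 := by
    simp [P0, bb, cm, sv, tv, Matrix.fromBlocks, finSumFinEquiv]; try rfl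
  have hP31 : P0 z 3 1 = 0 := by
    simp [P0, bb, cm, sv, tv, Matrix.fromBlocks, finSumFinEquiv]; try rfl
  have hP32 : P0 z 3 2 = 0 := by
    simp [P0, bb, cm, sv, tv, Matrix.fromBlocks, finSumFinEquiv]; try rfl
  have hP33 : P0 z 3 3 = 0 := by
    simp [P0, bb, cm, sv, tv, Matrix.fromBlocks, finSumFinEquiv]; try rfl
  have hP34 : P0 z 3 4 = z 5 := by
    simp [P0, bb, cm, sv, tv, Matrix.fromBlocks, finSumFinEquiv]; try rfl
  have hP35 : P0 z 3 5 = -z 4 := by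
    simp [P0, bb, cm, sv, tv, Matrix.fromBlocks, finSumFinEquiv]; try rfl
  have hP40 : P0 z 4 0 = 0 := by
    simp [P0, bb, cm, sv, tv, Matrix.fromBlocks, finSumFinEquiv]; try rfl
  have hP41 : P0 z 4 1 = 0 := by
    simp [P0, bb, cm, sv, tv, Matrix.fromBlocks, finSumFinEquiv]; try rfl
  have hP42 : P0 z 4 2 = 0 := by
    simp [P0, bb, cm, sv, tv, Matrix.fromBlocks, finSumFinEquiv]; try rfl
  have hP43 : P0 z 4 3 = -z 5 := by
    simp [P0, bb, cm, sv, tv, Matrix.fromBlocks, finSumFinEquiv]; try rfl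
  have hP44 : P0 z 4 4 = 0 := by
    simp [P0, bb, cm, sv, tv, Matrix.fromBlocks, finSumFinEquiv]; try rfl
  have hP45 : P0 z 4 5 = z 3 := by
    simp [P0, bb, cm, sv, tv, Matrix.fromBlocks, finSumFinEquiv]; try rfl
  have hP50 : P0 z 5 0 = 0 := by
    simp [P0, bb, cm, sv, tv, Matrix.fromBlocks, finSumFinEquiv]; try rfl
  have hP51 : P0 z 5 1 = 0 := by
    simp [P0, bb, cm, sv, tv, Matrix.fromBlocks, finSumFinEquiv]; try rfl
  have hP52 : P0 z 5 2 = 0 := by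
    simp [P0, bb, cm, sv, tv, Matrix.fromBlocks, finSumFinEquiv]; try rfl
  have hP53 : P0 z 5 3 = z 4 := by
    simp [P0, bb, cm, sv, tv, Matrix.fromBlocks, finSumFinEquiv]; try rfl
  have hP54 : P0 z 5 4 = -z 3 := by
    simp [P0, bb, cm, sv, tv, Matrix.fromBlocks, finSumFinEquiv]; try rfl
  have hP55 : P0 z 5 5 = 0 := by
    simp [P0, bb, cm, sv, tv, Matrix.fromBlocks, finSumFinEquiv]; try rfl
  have dA0 : ∀ l : ℂ, pd 0 (Apoly b1 l) z = (z 3 + Complex.I * z 4) * b1 ^ 2 := fun l => by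
    rw [pdA]; simp [Pi.single_apply]; try ring
  have dB0 : ∀ l : ℂ, pd 0 (Bpoly b1 l) z = l + z 5 := fun l => by
    rw [pdB]; simp [Pi.single_apply]; try ring
  have dA1 : ∀ l : ℂ, pd 1 (Apoly b1 l) z = Complex.I * ((z 3 + Complex.I * z 4) * b1 ^ 2) := fun l => by
    rw [pdA]; simp [Pi.single_apply]; try ring
  have dB1 : ∀ l : ℂ, pd 1 (Bpoly b1 l) z = -(Complex.I * (l + z 5)) := fun l => by
    rw [pdB]; simp [Pi.single_apply]; try ring
  have dA2 : ∀ l : ℂ, pd 2 (Apoly b1 l) z = -(l + z 5) := fun l => by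
    rw [pdA]; simp [Pi.single_apply]; try ring
  have dB2 : ∀ l : ℂ, pd 2 (Bpoly b1 l) z = b1 ^ 2 * (z 3 + Complex.I * z 4) := fun l => by
    rw [pdB]; simp [Pi.single_apply]; try ring
  have dA3 : ∀ l : ℂ, pd 3 (Apoly b1 l) z = (z 0 + Complex.I * z 1) * b1 ^ 2 := fun l => by
    rw [pdA]; simp [Pi.single_apply]; try ring
  have dB3 : ∀ l : ℂ, pd 3 (Bpoly b1 l) z = b1 ^ 2 * (l + z 2) := fun l => by
    rw [pdB]; simp [Pi.single_apply]; try ring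
  have dA4 : ∀ l : ℂ, pd 4 (Apoly b1 l) z = Complex.I * ((z 0 + Complex.I * z 1) * b1 ^ 2) := fun l => by
    rw [pdA]; simp [Pi.single_apply]; try ring
  have dB4 : ∀ l : ℂ, pd 4 (Bpoly b1 l) z = Complex.I * (b1 ^ 2 * (l + z 2)) := fun l => by
    rw [pdB]; simp [Pi.single_apply]; try ring
  have dA5 : ∀ l : ℂ, pd 5 (Apoly b1 l) z = l - z 2 := fun l => by
    rw [pdA]; simp [Pi.single_apply]; try ring
  have dB5 : ∀ l : ℂ, pd 5 (Bpoly b1 l) z = z 0 - Complex.I * z 1 := fun l => by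
    rw [pdB]; simp [Pi.single_apply]; try ring
  refine ⟨?_, ?_, ?_⟩
  · simp only [pb, Fin.sum_univ_six, hP00, hP01, hP02, hP03, hP04, hP05, hP10, hP11, hP12, hP13, hP14, hP15, hP20, hP21, hP22, hP23, hP24, hP25, hP30, hP31, hP32, hP33, hP34, hP35, hP40, hP41, hP42, hP43, hP44, hP45, hP50, hP51, hP52, hP53, hP54, hP55, dA0, dA1, dA2, dA3, dA4, dA5, dB0, dB1, dB2, dB3, dB4, dB5]
    linear_combination ((1)*(z 1)*(z 3)*(b1)^2*(mu) + (-1)*(z 1)*(z 3)*(b1)^2*(lam) + (-1)*(z 0)*(z 4)*(b1)^2*(mu) + (1)*(z 0)*(z 4)*(b1)^2*(lam)) * Complex.I_sq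
  · simp only [pb, Fin.sum_univ_six, hP00, hP01, hP02, hP03, hP04, hP05, hP10, hP11, hP12, hP13, hP14, hP15, hP20, hP21, hP22, hP23, hP24, hP25, hP30, hP31, hP32, hP33, hP34, hP35, hP40, hP41, hP42, hP43, hP44, hP45, hP50, hP51, hP52, hP53, hP54, hP55, dA0, dA1, dA2, dA3, dA4, dA5, dB0, dB1, dB2, dB3, dB4, dB5]
    linear_combination ((1)*(z 1)*(z 3)*(b1)^2*(mu) + (-1)*(z 1)*(z 3)*(b1)^2*(lam) + (1)*(z 0)*(z 4)*(b1)^2*(mu) + (-1)*(z 0)*(z 4)*(b1)^2*(lam)) * Complex.I_sq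
  · simp only [pb, Fin.sum_univ_six, hP00, hP01, hP02, hP03, hP04, hP05, hP10, hP11, hP12, hP13, hP14, hP15, hP20, hP21, hP22, hP23, hP24, hP25, hP30, hP31, hP32, hP33, hP34, hP35, hP40, hP41, hP42, hP43, hP44, hP45, hP50, hP51, hP52, hP53, hP54, hP55, dA0, dA1, dA2, dA3, dA4, dA5, dB0, dB1, dB2, dB3, dB4, dB5, hABz, hBBz]
    linear_combination ((-1)*(z 4)*(b1)^2*(lam)*(mu)^2 + (1)*(z 4)*(b1)^2*(lam)^2*(mu) + (1)*(z 2)*(z 4)*(b1)^2*(mu)^2 + (-2)*(z 2)*(z 4)*(b1)^2*(lam)*(mu) + (1)*(z 2)*(z 4)*(b1)^2*(lam)^2 + (1)*(z 2)^2*(z 4)*(b1)^2*(mu) + (-1)*(z 2)^2*(z 4)*(b1)^2*(lam) + (1)*(z 1)*(lam)*(mu)^2 + (-1)*(z 1)*(lam)^2*(mu) + (1)*(z 1)*(z 5)*(mu)^2 + (-1)*(z 1)*(z 5)*(lam)^2 + (1)*(z 1)*(z 5)^2*(mu) + (-1)*(z 1)*(z 5)^2*(lam) + (1)*(z 1)*(z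 4)^2*(b1)^4*(Complex.I)^2*(mu) + (-1)*(z 1)*(z 4)^2*(b1)^4*(Complex.I)^2*(lam) + (2)*(z 1)*(z 3)*(z 4)*(b1)^4*(Complex.I)*(mu) + (-2)*(z 1)*(z 3)*(z 4)*(b1)^4*(Complex.I)*(lam) + (1)*(z 1)*(z 3)^2*(b1)^4*(mu) + (-1)*(z 1)*(z 3)^2*(b1)^4*(lam) + (-1)*(z 1)^2*(z 4)*(b1)^2*(Complex.I)^2*(mu) + (1)*(z 1)^2*(z 4)*(b1)^2*(Complex.I)^2*(lam) + (1)*(z 0)^2*(z 4)*(b1)^2*(mu) + (-1)*(z 0)^2*(z 4)*(b1)^2*(lam)) * Complex.I_sq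
end
end

section
/- Let a = (0,0,1), b = (b_1, ib_1, 0), c = (c_1, −ic_1, 0). The quadratic bivector P_1^{(3)} with blocks ⟨a,s⟩ s_M, i[(a×s)⊗(a×t) + (b×s)⊗(c×t)], the negative transpose, and ⟨a,t⟩ t_M, annihilates the Casimirs |s|^2 and |t|^2: P_1^{(3)} d(|s|^2) = P_1^{(3)} d(|t|^2) = 0. -/
noncomputable section

/-- The quadratic bivector `P₁⁽³⁾` with `a = (0,0,1)` (so `|a| = 1`). -/
def P13 (b c : Fin 3 → ℂ) (z : V6) : Matrix (Fin 6) (Fin 6) ℂ :=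
  let a : Fin 3 → ℂ := ![0, 0, 1]
  bb ((dot a (sv z)) • cm (sv z))
     (Complex.I • (outer (cross a (sv z)) (cross a (tv z))
        + outer (cross b (sv z)) (cross c (tv z))))
     ((-Complex.I) • (outer (cross a (sv z)) (cross a (tv z))
        + outer (cross b (sv z)) (cross c (tv z))).transpose)
     ((dot a (tv z)) • cm (tv z))

lemma pd_tri (k1 k2 k3 j : Fin 6) (z : V6) :
    pd j (fun w : V6 => w k1 * w k1 + w k2 * w k2 + w k3 * w k3) z =
      (if k1 = j then 2 * z k1 else 0) + (if k2 = j then 2 * z k2 else 0)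
        + (if k3 = j then 2 * z k3 else 0) := by
  have hp : ∀ k : Fin 6, HasFDerivAt (𝕜 := ℂ) (fun w : V6 => w k)
      (ContinuousLinearMap.proj (R := ℂ) (φ := fun _ : Fin 6 => ℂ) k) z :=
    fun k => hasFDerivAt_apply k z
  have h := (((hp k1).mul (hp k1)).add ((hp k2).mul (hp k2))).add
    ((hp k3).mul (hp k3))
  rw [pd, show (fun w : V6 => w k1 * w k1 + w k2 * w k2 + w k3 * w k3) = ((((fun w : V6 => w k1) * fun w => w k1) + (fun w => w k2) * fun w => w k2) + (fun w => w k3) * fun w => w k3) from rfl, h.fderiv]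
  simp [Pi.single_apply]
  split <;> split <;> split <;> ring

lemma outer_mulVec (u v w : Fin 3 → ℂ) :
    (outer u v).mulVec w = (dot v w) • u := by
  funext i
  simp [outer, Matrix.mulVec, dotProduct, dot, Fin.sum_univ_three]
  ring

lemma outer_transpose (u v : Fin 3 → ℂ) : (outer u v).transpose = outer v u := by
  funext i j; simp [outer, Matrix.transpose_apply]; ring

lemma my_dot_cross_self (x s : Fin 3 → ℂ) : dot (cross x s) s = 0 := by
  simp [dot, cross, Fin.sum_univ_three]; ring

lemma grad_s (z : V6) : (fun j => pd j (fun w => dot (sv w) (sv w)) z)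
    = (Sum.elim (fun i => (2:ℂ) * sv z i) 0) ∘ (finSumFinEquiv (m:=3) (n:=3)).symm := by
  have hs : (fun w : V6 => dot (sv w) (sv w)) =
      fun w => w 0 * w 0 + w 1 * w 1 + w 2 * w 2 := by
    funext w; simp [dot, sv, Fin.sum_univ_three]
  funext j
  rw [hs, pd_tri]
  fin_cases j <;> simp [sv] <;> rfl

lemma grad_t (z : V6) : (fun j => pd j (fun w => dot (tv w) (tv w)) z)
    = (Sum.elim (0 : Fin 3 → ℂ) (fun i => (2:ℂ) * tv z i)) ∘ (finSumFinEquiv (m:=3) (n:=3)).symm := by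
  have ht : (fun w : V6 => dot (tv w) (tv w)) =
      fun w => w 3 * w 3 + w 4 * w 4 + w 5 * w 5 := by
    funext w; simp [dot, tv, Fin.sum_univ_three]
  funext j
  rw [ht, pd_tri]
  fin_cases j <;> simp [tv] <;> rfl

lemma bb_mulVec_s (A B C D : Matrix (Fin 3) (Fin 3) ℂ) (x : Fin 3 → ℂ) :
    (bb A B C D).mulVec ((Sum.elim x (0 : Fin 3 → ℂ)) ∘ (finSumFinEquiv (m:=3) (n:=3)).symm)
      = (Sum.elim (A.mulVec x) (C.mulVec x)) ∘ (finSumFinEquiv (m:=3) (n:=3)).symm := by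
  have key : ((Sum.elim x (0 : Fin 3 → ℂ)) ∘ ⇑(finSumFinEquiv (m:=3) (n:=3)).symm)
      ∘ ⇑(finSumFinEquiv (m:=3) (n:=3)).symm.symm = Sum.elim x (0 : Fin 3 → ℂ) := by
    funext p; simp
  rw [bb, Matrix.submatrix_mulVec_equiv, key, Matrix.fromBlocks_mulVec]
  simp

lemma bb_mulVec_t (A B C D : Matrix (Fin 3) (Fin 3) ℂ) (y : Fin 3 → ℂ) :
    (bb A B C D).mulVec ((Sum.elim (0 : Fin 3 → ℂ) y) ∘ (finSumFinEquiv (m:=3) (n:=3)).symm)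
      = (Sum.elim (B.mulVec y) (D.mulVec y)) ∘ (finSumFinEquiv (m:=3) (n:=3)).symm := by
  have key : ((Sum.elim (0 : Fin 3 → ℂ) y) ∘ ⇑(finSumFinEquiv (m:=3) (n:=3)).symm)
      ∘ ⇑(finSumFinEquiv (m:=3) (n:=3)).symm.symm = Sum.elim (0 : Fin 3 → ℂ) y := by
    funext p; simp
  rw [bb, Matrix.submatrix_mulVec_equiv, key, Matrix.fromBlocks_mulVec]
  simp

/-- `P₁⁽³⁾` (with `b = (b₁, ib₁, 0)`, `c = (c₁, −ic₁, 0)`) annihilates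
the differentials of the Casimirs `|s|²` and `|t|²`. -/
theorem P13_kills_casimirs (b1 c1 : ℂ) (z : V6) :
    (P13 ![b1, Complex.I * b1, 0] ![c1, -Complex.I * c1, 0] z).mulVec
      (fun j => pd j (fun w => dot (sv w) (sv w)) z) = 0 ∧
    (P13 ![b1, Complex.I * b1, 0] ![c1, -Complex.I * c1, 0] z).mulVec
      (fun j => pd j (fun w => dot (tv w) (tv w)) z) = 0 := by
  rw [grad_s z, grad_t z]
  simp only [P13]
  rw [bb_mulVec_s, bb_mulVec_t]
  have hcm : ∀ d : ℂ, ∀ v : Fin 3 → ℂ,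
      (d • cm v).mulVec (fun i => (2:ℂ) * v i) = 0 := by
    intro d v
    rw [Matrix.smul_mulVec]
    have : (cm v).mulVec (fun i => (2:ℂ) * v i) = 0 := by
      funext i
      fin_cases i <;>
        simp [cm, Matrix.mulVec, dotProduct, Fin.sum_univ_three] <;> ring
    rw [this, smul_zero]
  have hdc : ∀ x v : Fin 3 → ℂ, dot (cross x v) (fun i => (2:ℂ) * v i) = 0 := by
    intro x v; simp [dot, cross, Fin.sum_univ_three]; ring
  constructor
  · have hC : ((-Complex.I) • (outer (cross ![0,0,1] (sv z)) (cross ![0,0,1] (tv z))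
        + outer (cross ![b1, Complex.I * b1, 0] (sv z))
            (cross ![c1, -Complex.I * c1, 0] (tv z))).transpose).mulVec
        (fun i => (2:ℂ) * sv z i) = 0 := by
      rw [Matrix.transpose_add, outer_transpose, outer_transpose,
        Matrix.smul_mulVec, Matrix.add_mulVec, outer_mulVec, outer_mulVec,
        hdc, hdc]
      simp
    rw [hcm, hC]
    funext j
    rcases (finSumFinEquiv (m:=3) (n:=3)).symm j with p | p <;> simp_all
  · have hB : (Complex.I • (outer (cross ![0,0,1] (sv z)) (cross ![0,0,1] (tv z))
        + outer (cross ![b1, Complex.I * b1, 0] (sv z))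
            (cross ![c1, -Complex.I * c1, 0] (tv z)))).mulVec
        (fun i => (2:ℂ) * tv z i) = 0 := by
      rw [Matrix.smul_mulVec, Matrix.add_mulVec, outer_mulVec, outer_mulVec,
        hdc, hdc]
      simp
    rw [hcm, hB]
    funext j
    rcases (finSumFinEquiv (m:=3) (n:=3)).symm j with p | p <;> simp_all
end
end

section
/- The polynomial A(λ) = λ^2 − ⟨a,J⟩λ + |J|^2/4 − i⟨a, x×J⟩/(2κ) − |x|^2/(4κ^2) has Poisson-commuting coefficients with respect to the so*(4) bracket in (x,J)-variables: {⟨a,J⟩, |J|^2/4 − i⟨a, x×J⟩/(2κ) − |x|^2/(4κ^2)} = 0, where {J_i,J_j} = ε_{ijk}J_k, {J_i,x_j} = ε_{ijk}x_k, {x_i,x_j} = κ^2ε_{ijk}J_k. Consequently {A(λ), A(μ)} = 0 for all λ, μ. -/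
noncomputable section

/-- Coordinates `(x,J)`: `x` the first three, `J` the last three coordinates. -/
def xv (z : V6) (i : Fin 3) : ℂ := z (Fin.castAdd 3 i)
def Jv (z : V6) (i : Fin 3) : ℂ := z (Fin.natAdd 3 i)

/-- The `so*(4)` Lie–Poisson bivector in `(x,J)`-variables:
`{JᵢJⱼ} = εJ`, `{Jᵢ,xⱼ} = εx`, `{xᵢ,xⱼ} = κ²εJ`. -/
def Pxj (κ : ℂ) (z : V6) : Matrix (Fin 6) (Fin 6) ℂ :=
  bb (κ ^ 2 • cm (Jv z)) (cm (xv z)) (cm (xv z)) (cm (Jv z))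

/-- `A(λ) = λ² − ⟨a,J⟩λ + |J|²/4 − i⟨a,x×J⟩/(2κ) − |x|²/(4κ²)`. -/
def Acoeff (κ : ℂ) (a : Fin 3 → ℂ) (z : V6) : ℂ :=
  dot (Jv z) (Jv z) / 4 - Complex.I * dot a (cross (xv z) (Jv z)) / (2 * κ)
    - dot (xv z) (xv z) / (4 * κ ^ 2)

def Alam (κ : ℂ) (a : Fin 3 → ℂ) (lam : ℂ) (z : V6) : ℂ :=
  lam ^ 2 - dot a (Jv z) * lam + Acoeff κ a z


/- ### Auxiliary lemmas -/

lemma Pe00 (κ : ℂ) (z : V6) : Pxj κ z 0 0 = κ ^ 2 • ((0:ℂ)) := rfl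
lemma Pe01 (κ : ℂ) (z : V6) : Pxj κ z 0 1 = κ ^ 2 • (z 5) := rfl
lemma Pe02 (κ : ℂ) (z : V6) : Pxj κ z 0 2 = κ ^ 2 • (-z 4) := rfl
lemma Pe03 (κ : ℂ) (z : V6) : Pxj κ z 0 3 = ((0:ℂ)) := rfl
lemma Pe04 (κ : ℂ) (z : V6) : Pxj κ z 0 4 = (z 2) := rfl
lemma Pe05 (κ : ℂ) (z : V6) : Pxj κ z 0 5 = (-z 1) := rfl
lemma Pe10 (κ : ℂ) (z : V6) : Pxj κ z 1 0 = κ ^ 2 • (-z 5) := rfl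
lemma Pe11 (κ : ℂ) (z : V6) : Pxj κ z 1 1 = κ ^ 2 • ((0:ℂ)) := rfl
lemma Pe12 (κ : ℂ) (z : V6) : Pxj κ z 1 2 = κ ^ 2 • (z 3) := rfl
lemma Pe13 (κ : ℂ) (z : V6) : Pxj κ z 1 3 = (-z 2) := rfl
lemma Pe14 (κ : ℂ) (z : V6) : Pxj κ z 1 4 = ((0:ℂ)) := rfl
lemma Pe15 (κ : ℂ) (z : V6) : Pxj κ z 1 5 = (z 0) := rfl
lemma Pe20 (κ : ℂ) (z : V6) : Pxj κ z 2 0 = κ ^ 2 • (z 4) := rfl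
lemma Pe21 (κ : ℂ) (z : V6) : Pxj κ z 2 1 = κ ^ 2 • (-z 3) := rfl
lemma Pe22 (κ : ℂ) (z : V6) : Pxj κ z 2 2 = κ ^ 2 • ((0:ℂ)) := rfl
lemma Pe23 (κ : ℂ) (z : V6) : Pxj κ z 2 3 = (z 1) := rfl
lemma Pe24 (κ : ℂ) (z : V6) : Pxj κ z 2 4 = (-z 0) := rfl
lemma Pe25 (κ : ℂ) (z : V6) : Pxj κ z 2 5 = ((0:ℂ)) := rfl
lemma Pe30 (κ : ℂ) (z : V6) : Pxj κ z 3 0 = ((0:ℂ)) := rfl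
lemma Pe31 (κ : ℂ) (z : V6) : Pxj κ z 3 1 = (z 2) := rfl
lemma Pe32 (κ : ℂ) (z : V6) : Pxj κ z 3 2 = (-z 1) := rfl
lemma Pe33 (κ : ℂ) (z : V6) : Pxj κ z 3 3 = ((0:ℂ)) := rfl
lemma Pe34 (κ : ℂ) (z : V6) : Pxj κ z 3 4 = (z 5) := rfl
lemma Pe35 (κ : ℂ) (z : V6) : Pxj κ z 3 5 = (-z 4) := rfl
lemma Pe40 (κ : ℂ) (z : V6) : Pxj κ z 4 0 = (-z 2) := rfl
lemma Pe41 (κ : ℂ) (z : V6) : Pxj κ z 4 1 = ((0:ℂ)) := rfl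
lemma Pe42 (κ : ℂ) (z : V6) : Pxj κ z 4 2 = (z 0) := rfl
lemma Pe43 (κ : ℂ) (z : V6) : Pxj κ z 4 3 = (-z 5) := rfl
lemma Pe44 (κ : ℂ) (z : V6) : Pxj κ z 4 4 = ((0:ℂ)) := rfl
lemma Pe45 (κ : ℂ) (z : V6) : Pxj κ z 4 5 = (z 3) := rfl
lemma Pe50 (κ : ℂ) (z : V6) : Pxj κ z 5 0 = (z 1) := rfl
lemma Pe51 (κ : ℂ) (z : V6) : Pxj κ z 5 1 = (-z 0) := rfl
lemma Pe52 (κ : ℂ) (z : V6) : Pxj κ z 5 2 = ((0:ℂ)) := rfl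
lemma Pe53 (κ : ℂ) (z : V6) : Pxj κ z 5 3 = (z 4) := rfl
lemma Pe54 (κ : ℂ) (z : V6) : Pxj κ z 5 4 = (-z 3) := rfl
lemma Pe55 (κ : ℂ) (z : V6) : Pxj κ z 5 5 = ((0:ℂ)) := rfl

lemma pd_coord' (i j : Fin 6) (z : V6) :
    pd i (fun w : V6 => w j) z = if j = i then 1 else 0 := by
  unfold pd
  have h : (fun w : V6 => w j)
      = ⇑(ContinuousLinearMap.proj (R := ℂ) (φ := fun _ : Fin 6 => ℂ) j) := rfl
  rw [h, ContinuousLinearMap.fderiv]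
  show (Pi.single i (1:ℂ) : V6) j = _
  simp [Pi.single_apply]

lemma pd_const' (i : Fin 6) (c : ℂ) (z : V6) : pd i (fun _ : V6 => c) z = 0 := by
  unfold pd; simp

lemma pd_add' (i : Fin 6) (f g : V6 → ℂ) (z : V6) (hf : DifferentiableAt ℂ f z)
    (hg : DifferentiableAt ℂ g z) :
    pd i (fun w => f w + g w) z = pd i f z + pd i g z := by
  unfold pd; rw [fderiv_fun_add hf hg]; rfl

lemma pd_sub' (i : Fin 6) (f g : V6 → ℂ) (z : V6) (hf : DifferentiableAt ℂ f z)
    (hg : DifferentiableAt ℂ g z) :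
    pd i (fun w => f w - g w) z = pd i f z - pd i g z := by
  unfold pd; rw [fderiv_fun_sub hf hg]; rfl

lemma pd_mul' (i : Fin 6) (f g : V6 → ℂ) (z : V6) (hf : DifferentiableAt ℂ f z)
    (hg : DifferentiableAt ℂ g z) :
    pd i (fun w => f w * g w) z = pd i f z * g z + f z * pd i g z := by
  unfold pd; rw [fderiv_fun_mul hf hg]
  simp only [ContinuousLinearMap.add_apply, ContinuousLinearMap.smul_apply, smul_eq_mul]
  ring

lemma pd_div_const' (i : Fin 6) (f : V6 → ℂ) (c : ℂ) (z : V6)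
    (hf : DifferentiableAt ℂ f z) :
    pd i (fun w => f w / c) z = pd i f z / c := by
  unfold pd
  simp only [div_eq_mul_inv]
  rw [fderiv_mul_const hf]
  simp [mul_comm]

lemma dF0 (a : Fin 3 → ℂ) (z : V6) : pd 0 (fun w : V6 => a 0 * w 3 + a 1 * w 4 + a 2 * w 5) z = 0 := by
  simp (disch := fun_prop) only [pd_add', pd_sub', pd_mul', pd_div_const', pd_const', pd_coord']
  simp

lemma dF1 (a : Fin 3 → ℂ) (z : V6) : pd 1 (fun w : V6 => a 0 * w 3 + a 1 * w 4 + a 2 * w 5) z = 0 := by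
  simp (disch := fun_prop) only [pd_add', pd_sub', pd_mul', pd_div_const', pd_const', pd_coord']
  simp

lemma dF2 (a : Fin 3 → ℂ) (z : V6) : pd 2 (fun w : V6 => a 0 * w 3 + a 1 * w 4 + a 2 * w 5) z = 0 := by
  simp (disch := fun_prop) only [pd_add', pd_sub', pd_mul', pd_div_const', pd_const', pd_coord']
  simp

lemma dF3 (a : Fin 3 → ℂ) (z : V6) : pd 3 (fun w : V6 => a 0 * w 3 + a 1 * w 4 + a 2 * w 5) z = a 0 := by
  simp (disch := fun_prop) only [pd_add', pd_sub', pd_mul', pd_div_const', pd_const', pd_coord']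
  simp

lemma dF4 (a : Fin 3 → ℂ) (z : V6) : pd 4 (fun w : V6 => a 0 * w 3 + a 1 * w 4 + a 2 * w 5) z = a 1 := by
  simp (disch := fun_prop) only [pd_add', pd_sub', pd_mul', pd_div_const', pd_const', pd_coord']
  simp

lemma dF5 (a : Fin 3 → ℂ) (z : V6) : pd 5 (fun w : V6 => a 0 * w 3 + a 1 * w 4 + a 2 * w 5) z = a 2 := by
  simp (disch := fun_prop) only [pd_add', pd_sub', pd_mul', pd_div_const', pd_const', pd_coord']
  simp

lemma dC0 (κ : ℂ) (hκ : κ ≠ 0) (a : Fin 3 → ℂ) (z : V6) :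
    pd 0 (fun w : V6 => (w 3 * w 3 + w 4 * w 4 + w 5 * w 5) / 4
      - Complex.I * (a 0 * (w 1 * w 5 - w 2 * w 4) + a 1 * (w 2 * w 3 - w 0 * w 5)
          + a 2 * (w 0 * w 4 - w 1 * w 3)) / (2 * κ)
      - (w 0 * w 0 + w 1 * w 1 + w 2 * w 2) / (4 * κ ^ 2)) z = (-(2 * Complex.I * κ * (a 2 * z 4 - a 1 * z 5)) - 2 * z 0) / (4 * κ ^ 2) := by
  simp (disch := fun_prop) only [pd_add', pd_sub', pd_mul', pd_div_const', pd_const', pd_coord']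
  simp
  field_simp
  ring

lemma dC1 (κ : ℂ) (hκ : κ ≠ 0) (a : Fin 3 → ℂ) (z : V6) :
    pd 1 (fun w : V6 => (w 3 * w 3 + w 4 * w 4 + w 5 * w 5) / 4
      - Complex.I * (a 0 * (w 1 * w 5 - w 2 * w 4) + a 1 * (w 2 * w 3 - w 0 * w 5)
          + a 2 * (w 0 * w 4 - w 1 * w 3)) / (2 * κ)
      - (w 0 * w 0 + w 1 * w 1 + w 2 * w 2) / (4 * κ ^ 2)) z = (-(2 * Complex.I * κ * (a 0 * z 5 - a 2 * z 3)) - 2 * z 1) / (4 * κ ^ 2) := by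
  simp (disch := fun_prop) only [pd_add', pd_sub', pd_mul', pd_div_const', pd_const', pd_coord']
  simp
  field_simp
  ring

lemma dC2 (κ : ℂ) (hκ : κ ≠ 0) (a : Fin 3 → ℂ) (z : V6) :
    pd 2 (fun w : V6 => (w 3 * w 3 + w 4 * w 4 + w 5 * w 5) / 4
      - Complex.I * (a 0 * (w 1 * w 5 - w 2 * w 4) + a 1 * (w 2 * w 3 - w 0 * w 5)
          + a 2 * (w 0 * w 4 - w 1 * w 3)) / (2 * κ)
      - (w 0 * w 0 + w 1 * w 1 + w 2 * w 2) / (4 * κ ^ 2)) z = (-(2 * Complex.I * κ * (a 1 * z 3 - a 0 * z 4)) - 2 * z 2) / (4 * κ ^ 2) := by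
  simp (disch := fun_prop) only [pd_add', pd_sub', pd_mul', pd_div_const', pd_const', pd_coord']
  simp
  field_simp
  ring

lemma dC3 (κ : ℂ) (hκ : κ ≠ 0) (a : Fin 3 → ℂ) (z : V6) :
    pd 3 (fun w : V6 => (w 3 * w 3 + w 4 * w 4 + w 5 * w 5) / 4
      - Complex.I * (a 0 * (w 1 * w 5 - w 2 * w 4) + a 1 * (w 2 * w 3 - w 0 * w 5)
          + a 2 * (w 0 * w 4 - w 1 * w 3)) / (2 * κ)
      - (w 0 * w 0 + w 1 * w 1 + w 2 * w 2) / (4 * κ ^ 2)) z = (2 * κ ^ 2 * z 3 - 2 * Complex.I * κ * (a 1 * z 2 - a 2 * z 1)) / (4 * κ ^ 2) := by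
  simp (disch := fun_prop) only [pd_add', pd_sub', pd_mul', pd_div_const', pd_const', pd_coord']
  simp
  field_simp
  ring

lemma dC4 (κ : ℂ) (hκ : κ ≠ 0) (a : Fin 3 → ℂ) (z : V6) :
    pd 4 (fun w : V6 => (w 3 * w 3 + w 4 * w 4 + w 5 * w 5) / 4
      - Complex.I * (a 0 * (w 1 * w 5 - w 2 * w 4) + a 1 * (w 2 * w 3 - w 0 * w 5)
          + a 2 * (w 0 * w 4 - w 1 * w 3)) / (2 * κ)
      - (w 0 * w 0 + w 1 * w 1 + w 2 * w 2) / (4 * κ ^ 2)) z = (2 * κ ^ 2 * z 4 - 2 * Complex.I * κ * (a 2 * z 0 - a 0 * z 2)) / (4 * κ ^ 2) := by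
  simp (disch := fun_prop) only [pd_add', pd_sub', pd_mul', pd_div_const', pd_const', pd_coord']
  simp
  field_simp
  ring

lemma dC5 (κ : ℂ) (hκ : κ ≠ 0) (a : Fin 3 → ℂ) (z : V6) :
    pd 5 (fun w : V6 => (w 3 * w 3 + w 4 * w 4 + w 5 * w 5) / 4
      - Complex.I * (a 0 * (w 1 * w 5 - w 2 * w 4) + a 1 * (w 2 * w 3 - w 0 * w 5)
          + a 2 * (w 0 * w 4 - w 1 * w 3)) / (2 * κ)
      - (w 0 * w 0 + w 1 * w 1 + w 2 * w 2) / (4 * κ ^ 2)) z = (2 * κ ^ 2 * z 5 - 2 * Complex.I * κ * (a 0 * z 1 - a 1 * z 0)) / (4 * κ ^ 2) := by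
  simp (disch := fun_prop) only [pd_add', pd_sub', pd_mul', pd_div_const', pd_const', pd_coord']
  simp
  field_simp
  ring

lemma dA0 (κ : ℂ) (hκ : κ ≠ 0) (a : Fin 3 → ℂ) (l : ℂ) (z : V6) :
    pd 0 (fun w : V6 => l ^ 2 - (a 0 * w 3 + a 1 * w 4 + a 2 * w 5) * l + ((w 3 * w 3 + w 4 * w 4 + w 5 * w 5) / 4
      - Complex.I * (a 0 * (w 1 * w 5 - w 2 * w 4) + a 1 * (w 2 * w 3 - w 0 * w 5)
          + a 2 * (w 0 * w 4 - w 1 * w 3)) / (2 * κ)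
      - (w 0 * w 0 + w 1 * w 1 + w 2 * w 2) / (4 * κ ^ 2))) z = ((-(2 * Complex.I * κ * (a 2 * z 4 - a 1 * z 5)) - 2 * z 0) - 4 * κ ^ 2 * (0) * l) / (4 * κ ^ 2) := by
  simp (disch := fun_prop) only [pd_add', pd_sub', pd_mul', pd_div_const', pd_const', pd_coord']
  simp
  field_simp
  ring

lemma dA1 (κ : ℂ) (hκ : κ ≠ 0) (a : Fin 3 → ℂ) (l : ℂ) (z : V6) :
    pd 1 (fun w : V6 => l ^ 2 - (a 0 * w 3 + a 1 * w 4 + a 2 * w 5) * l + ((w 3 * w 3 + w 4 * w 4 + w 5 * w 5) / 4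
      - Complex.I * (a 0 * (w 1 * w 5 - w 2 * w 4) + a 1 * (w 2 * w 3 - w 0 * w 5)
          + a 2 * (w 0 * w 4 - w 1 * w 3)) / (2 * κ)
      - (w 0 * w 0 + w 1 * w 1 + w 2 * w 2) / (4 * κ ^ 2))) z = ((-(2 * Complex.I * κ * (a 0 * z 5 - a 2 * z 3)) - 2 * z 1) - 4 * κ ^ 2 * (0) * l) / (4 * κ ^ 2) := by
  simp (disch := fun_prop) only [pd_add', pd_sub', pd_mul', pd_div_const', pd_const', pd_coord']
  simp
  field_simp
  ring

lemma dA2 (κ : ℂ) (hκ : κ ≠ 0) (a : Fin 3 → ℂ) (l : ℂ) (z : V6) :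
    pd 2 (fun w : V6 => l ^ 2 - (a 0 * w 3 + a 1 * w 4 + a 2 * w 5) * l + ((w 3 * w 3 + w 4 * w 4 + w 5 * w 5) / 4
      - Complex.I * (a 0 * (w 1 * w 5 - w 2 * w 4) + a 1 * (w 2 * w 3 - w 0 * w 5)
          + a 2 * (w 0 * w 4 - w 1 * w 3)) / (2 * κ)
      - (w 0 * w 0 + w 1 * w 1 + w 2 * w 2) / (4 * κ ^ 2))) z = ((-(2 * Complex.I * κ * (a 1 * z 3 - a 0 * z 4)) - 2 * z 2) - 4 * κ ^ 2 * (0) * l) / (4 * κ ^ 2) := by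
  simp (disch := fun_prop) only [pd_add', pd_sub', pd_mul', pd_div_const', pd_const', pd_coord']
  simp
  field_simp
  ring

lemma dA3 (κ : ℂ) (hκ : κ ≠ 0) (a : Fin 3 → ℂ) (l : ℂ) (z : V6) :
    pd 3 (fun w : V6 => l ^ 2 - (a 0 * w 3 + a 1 * w 4 + a 2 * w 5) * l + ((w 3 * w 3 + w 4 * w 4 + w 5 * w 5) / 4
      - Complex.I * (a 0 * (w 1 * w 5 - w 2 * w 4) + a 1 * (w 2 * w 3 - w 0 * w 5)
          + a 2 * (w 0 * w 4 - w 1 * w 3)) / (2 * κ)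
      - (w 0 * w 0 + w 1 * w 1 + w 2 * w 2) / (4 * κ ^ 2))) z = ((2 * κ ^ 2 * z 3 - 2 * Complex.I * κ * (a 1 * z 2 - a 2 * z 1)) - 4 * κ ^ 2 * (a 0) * l) / (4 * κ ^ 2) := by
  simp (disch := fun_prop) only [pd_add', pd_sub', pd_mul', pd_div_const', pd_const', pd_coord']
  simp
  field_simp
  ring

lemma dA4 (κ : ℂ) (hκ : κ ≠ 0) (a : Fin 3 → ℂ) (l : ℂ) (z : V6) :
    pd 4 (fun w : V6 => l ^ 2 - (a 0 * w 3 + a 1 * w 4 + a 2 * w 5) * l + ((w 3 * w 3 + w 4 * w 4 + w 5 * w 5) / 4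
      - Complex.I * (a 0 * (w 1 * w 5 - w 2 * w 4) + a 1 * (w 2 * w 3 - w 0 * w 5)
          + a 2 * (w 0 * w 4 - w 1 * w 3)) / (2 * κ)
      - (w 0 * w 0 + w 1 * w 1 + w 2 * w 2) / (4 * κ ^ 2))) z = ((2 * κ ^ 2 * z 4 - 2 * Complex.I * κ * (a 2 * z 0 - a 0 * z 2)) - 4 * κ ^ 2 * (a 1) * l) / (4 * κ ^ 2) := by
  simp (disch := fun_prop) only [pd_add', pd_sub', pd_mul', pd_div_const', pd_const', pd_coord']
  simp
  field_simp
  ring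

lemma dA5 (κ : ℂ) (hκ : κ ≠ 0) (a : Fin 3 → ℂ) (l : ℂ) (z : V6) :
    pd 5 (fun w : V6 => l ^ 2 - (a 0 * w 3 + a 1 * w 4 + a 2 * w 5) * l + ((w 3 * w 3 + w 4 * w 4 + w 5 * w 5) / 4
      - Complex.I * (a 0 * (w 1 * w 5 - w 2 * w 4) + a 1 * (w 2 * w 3 - w 0 * w 5)
          + a 2 * (w 0 * w 4 - w 1 * w 3)) / (2 * κ)
      - (w 0 * w 0 + w 1 * w 1 + w 2 * w 2) / (4 * κ ^ 2))) z = ((2 * κ ^ 2 * z 5 - 2 * Complex.I * κ * (a 0 * z 1 - a 1 * z 0)) - 4 * κ ^ 2 * (a 2) * l) / (4 * κ ^ 2) := by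
  simp (disch := fun_prop) only [pd_add', pd_sub', pd_mul', pd_div_const', pd_const', pd_coord']
  simp
  field_simp
  ring


lemma hFcoord (a : Fin 3 → ℂ) : (fun w : V6 => dot a (Jv w)) = (fun w : V6 => a 0 * w 3 + a 1 * w 4 + a 2 * w 5) := by
  funext w
  show dot a (Jv w) = _
  unfold dot
  rw [Fin.sum_univ_three]
  rfl

lemma hCcoord (κ : ℂ) (a : Fin 3 → ℂ) : Acoeff κ a = (fun w : V6 => (w 3 * w 3 + w 4 * w 4 + w 5 * w 5) / 4
      - Complex.I * (a 0 * (w 1 * w 5 - w 2 * w 4) + a 1 * (w 2 * w 3 - w 0 * w 5)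
          + a 2 * (w 0 * w 4 - w 1 * w 3)) / (2 * κ)
      - (w 0 * w 0 + w 1 * w 1 + w 2 * w 2) / (4 * κ ^ 2)) := by
  funext w
  show dot (Jv w) (Jv w) / 4 - Complex.I * dot a (cross (xv w) (Jv w)) / (2 * κ)
      - dot (xv w) (xv w) / (4 * κ ^ 2) = _
  unfold dot
  simp only [Fin.sum_univ_three]
  rfl

lemma hAcoord (κ : ℂ) (a : Fin 3 → ℂ) (l : ℂ) : Alam κ a l = (fun w : V6 => l ^ 2 - (a 0 * w 3 + a 1 * w 4 + a 2 * w 5) * l + ((w 3 * w 3 + w 4 * w 4 + w 5 * w 5) / 4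
      - Complex.I * (a 0 * (w 1 * w 5 - w 2 * w 4) + a 1 * (w 2 * w 3 - w 0 * w 5)
          + a 2 * (w 0 * w 4 - w 1 * w 3)) / (2 * κ)
      - (w 0 * w 0 + w 1 * w 1 + w 2 * w 2) / (4 * κ ^ 2))) := by
  funext w
  show l ^ 2 - dot a (Jv w) * l + Acoeff κ a w = _
  rw [congrFun (hFcoord a) w, congrFun (hCcoord κ a) w]

set_option maxHeartbeats 4000000 in
lemma part1 (κ : ℂ) (hκ : κ ≠ 0) (a : Fin 3 → ℂ) (z : V6) :
    pb (Pxj κ) (fun w => dot a (Jv w)) (Acoeff κ a) z = 0 := by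
  rw [hFcoord, hCcoord]
  simp only [pb, Fin.sum_univ_six, dF0, dF1, dF2, dF3, dF4, dF5, dC0 κ hκ, dC1 κ hκ, dC2 κ hκ,
    dC3 κ hκ, dC4 κ hκ, dC5 κ hκ, Pe00, Pe01, Pe02, Pe03, Pe04, Pe05, Pe10, Pe11, Pe12, Pe13, Pe14, Pe15, Pe20, Pe21, Pe22, Pe23, Pe24, Pe25, Pe30, Pe31, Pe32, Pe33, Pe34, Pe35, Pe40, Pe41, Pe42, Pe43, Pe44, Pe45, Pe50, Pe51, Pe52, Pe53, Pe54, Pe55, smul_eq_mul]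
  simp only [← mul_div_assoc, ← add_div, div_sub_div_same]
  refine div_eq_zero_iff.mpr (Or.inl ?_)
  ring

set_option maxHeartbeats 4000000 in
lemma part2 (κ : ℂ) (hκ : κ ≠ 0) (a : Fin 3 → ℂ) (lam mu : ℂ) (z : V6) :
    pb (Pxj κ) (Alam κ a lam) (Alam κ a mu) z = 0 := by
  rw [hAcoord κ a lam, hAcoord κ a mu]
  simp only [pb, Fin.sum_univ_six, dA0 κ hκ, dA1 κ hκ, dA2 κ hκ, dA3 κ hκ, dA4 κ hκ,
    dA5 κ hκ, Pe00, Pe01, Pe02, Pe03, Pe04, Pe05, Pe10, Pe11, Pe12, Pe13, Pe14, Pe15, Pe20, Pe21, Pe22, Pe23, Pe24, Pe25, Pe30, Pe31, Pe32, Pe33, Pe34, Pe35, Pe40, Pe41, Pe42, Pe43, Pe44, Pe45, Pe50, Pe51, Pe52, Pe53, Pe54, Pe55, smul_eq_mul]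
  simp only [← mul_div_assoc, div_mul_div_comm, ← add_div, div_sub_div_same]
  refine div_eq_zero_iff.mpr (Or.inl ?_)
  ring

/-- the coefficients of `A(λ)` Poisson-commute in the `(x,J)` bracket,
hence `{A(λ),A(μ)} = 0` for all `λ, μ`. -/
theorem Alam_selfcommute (κ : ℂ) (hκ : κ ≠ 0) (a : Fin 3 → ℂ) (ha : dot a a = 1) :
    (∀ z : V6, pb (Pxj κ) (fun w => dot a (Jv w)) (Acoeff κ a) z = 0) ∧
    (∀ lam mu : ℂ, ∀ z : V6, pb (Pxj κ) (Alam κ a lam) (Alam κ a mu) z = 0) := by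
  exact ⟨fun z => part1 κ hκ a z, fun lam mu z => part2 κ hκ a lam mu z⟩
end
end
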